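/- arXiv:1312.7836 — 2 statements merged into one kernel-verified Lean document; each statement's English description precedes it below -/
import Mathlib

section
/- Let R be a commutative noetherian ring, J an ideal of R, and I ⊆ J an ideal. Then I is a reduction of J (i.e., I·Jⁿ = J^{n+1} for some n ≥ 0) if and only if the Rees algebra R[Jt] = ⊕ₙ Jⁿ is a finite module over the subalgebra R[It] = ⊕ₙ Iⁿ. -/
open Polynomial

set_option maxHeartbeats 1000000 in
set_option synthInstance.maxHeartbeats 400000 in
/-- `I ⊆ J` is a reduction of `J` (i.e. `I·Jⁿ = J^{n+1}` for some `n`)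
iff the Rees algebra of `J` is a finite module over the Rees algebra of `I`. -/
theorem reduction_iff_reesAlgebra_finite {R : Type*} [CommRing R] [IsNoetherianRing R]
    (I J : Ideal R) (hIJ : I ≤ J) (hle : reesAlgebra I ≤ reesAlgebra J) :
    (∃ n : ℕ, I * J ^ n = J ^ (n + 1)) ↔
      (Subalgebra.inclusion hle).toRingHom.Finite := by
  classical
  letI : Algebra (reesAlgebra I) (reesAlgebra J) :=
    (Subalgebra.inclusion hle).toRingHom.toAlgebra
  have hsmul : ∀ (c : reesAlgebra I) (b : reesAlgebra J),
      ((c • b : reesAlgebra J) : R[X]) = (c : R[X]) * (b : R[X]) := by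
    intro c b
    rw [Algebra.smul_def, RingHom.algebraMap_toAlgebra]
    rfl
  show _ ↔ Module.Finite (reesAlgebra I) (reesAlgebra J)
  constructor
  · rintro ⟨n, hn⟩
    -- J^(n+m) = I^m * J^n
    have hpow : ∀ m : ℕ, J ^ (n + m) = I ^ m * J ^ n := by
      intro m
      induction m with
      | zero => simp
      | succ m ih =>
        calc J ^ (n + (m + 1)) = J ^ (n + m) * J := by rw [← add_assoc, pow_succ]
          _ = I ^ m * J ^ n * J := by rw [ih]
          _ = I ^ m * J ^ (n + 1) := by rw [mul_assoc, ← pow_succ]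
          _ = I ^ m * (I * J ^ n) := by rw [hn]
          _ = I ^ (m + 1) * J ^ n := by rw [pow_succ]; ring
    choose s hs using fun k : ℕ => IsNoetherian.noetherian (J ^ k)
    set S : Set (reesAlgebra J) :=
      {b | ∃ k, k ≤ n ∧ ∃ r ∈ s k, (b : R[X]) = monomial k r} with hS
    have hSfin : S.Finite := by
      have h1 : (⋃ k ∈ Set.Iic n, (fun r : R => (monomial k r : R[X])) '' (s k)).Finite :=
        Set.Finite.biUnion (Set.finite_Iic n) fun k _ => (s k).finite_toSet.image _
      have h2 : S ⊆ Subtype.val ⁻¹' (⋃ k ∈ Set.Iic n,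
          (fun r : R => (monomial k r : R[X])) '' (s k)) := by
        rintro b ⟨k, hk, r, hr, hb⟩
        exact Set.mem_preimage.mpr (Set.mem_biUnion hk ⟨r, hr, hb.symm⟩)
      exact (h1.preimage Subtype.val_injective.injOn).subset h2
    rw [Module.finite_def, Submodule.fg_def]
    refine ⟨S, hSfin, Submodule.eq_top_iff'.mpr ?_⟩
    have key1 : ∀ k, k ≤ n → ∀ r, r ∈ J ^ k → ∀ b : reesAlgebra J,
        (b : R[X]) = monomial k r → b ∈ Submodule.span (reesAlgebra I) S := by
      intro k hk r hr
      rw [← hs k] at hr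
      induction hr using Submodule.span_induction with
      | mem x hx =>
        intro b hb
        exact Submodule.subset_span ⟨k, hk, x, hx, hb⟩
      | zero =>
        intro b hb
        have : b = 0 := Subtype.ext (by simp [hb])
        rw [this]; exact Submodule.zero_mem _
      | add x y hx hy ihx ihy =>
        intro b hb
        have hxJ : x ∈ J ^ k := (hs k) ▸ hx
        have hyJ : y ∈ J ^ k := (hs k) ▸ hy
        have : b = (⟨monomial k x, reesAlgebra.monomial_mem.mpr hxJ⟩ : reesAlgebra J)
            + ⟨monomial k y, reesAlgebra.monomial_mem.mpr hyJ⟩ :=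
          Subtype.ext (by simp [hb, map_add])
        rw [this]
        exact Submodule.add_mem _ (ihx _ rfl) (ihy _ rfl)
      | smul c x hx ihx =>
        intro b hb
        have hxJ : x ∈ J ^ k := (hs k) ▸ hx
        have : b = (⟨C c, (reesAlgebra I).algebraMap_mem c⟩ : reesAlgebra I)
            • (⟨monomial k x, reesAlgebra.monomial_mem.mpr hxJ⟩ : reesAlgebra J) := by
          apply Subtype.ext
          rw [hsmul]
          simp [hb, smul_eq_mul, C_mul_monomial]
        rw [this]
        exact Submodule.smul_mem _ _ (ihx _ rfl)
    have key2 : ∀ m r, r ∈ J ^ m → ∀ b : reesAlgebra J,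
        (b : R[X]) = monomial m r → b ∈ Submodule.span (reesAlgebra I) S := by
      intro m r hr
      rcases le_or_gt m n with hm | hm
      · exact key1 m hm r hr
      · obtain ⟨k, rfl⟩ : ∃ k, m = n + k := ⟨m - n, by omega⟩
        rw [hpow k] at hr
        induction hr using Submodule.mul_induction_on' with
        | mem_mul_mem a ha c hc =>
          intro b hb
          have : b = (⟨monomial k a, reesAlgebra.monomial_mem.mpr ha⟩ : reesAlgebra I)
              • (⟨monomial n c, reesAlgebra.monomial_mem.mpr hc⟩ : reesAlgebra J) := by
            apply Subtype.ext
            rw [hsmul]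
            simp only [hb, monomial_mul_monomial]
            rw [add_comm k n]
          rw [this]
          exact Submodule.smul_mem _ _ (key1 n le_rfl c hc _ rfl)
        | add x hx y hy ihx ihy =>
          intro b hb
          have hxJ : x ∈ J ^ (n + k) := (hpow k) ▸ hx
          have hyJ : y ∈ J ^ (n + k) := (hpow k) ▸ hy
          have : b = (⟨monomial (n + k) x, reesAlgebra.monomial_mem.mpr hxJ⟩ : reesAlgebra J)
              + ⟨monomial (n + k) y, reesAlgebra.monomial_mem.mpr hyJ⟩ :=
            Subtype.ext (by simp [hb, map_add])
          rw [this]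
          exact Submodule.add_mem _ (ihx _ rfl) (ihy _ rfl)
    intro b
    have hb : b = ∑ i ∈ (b : R[X]).support,
        (⟨monomial i ((b : R[X]).coeff i), reesAlgebra.monomial_mem.mpr (b.2 i)⟩ :
          reesAlgebra J) := by
      apply Subtype.ext
      rw [AddSubmonoidClass.coe_finset_sum]
      exact (b : R[X]).as_sum_support
    rw [hb]
    exact Submodule.sum_mem _ fun i _ => key2 i _ (b.2 i) _ rfl
  · intro hfin
    obtain ⟨T, hT⟩ := Module.finite_def.mp hfin
    set n : ℕ := T.sup fun b => (b : R[X]).natDegree with hn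
    refine ⟨n, le_antisymm ((Ideal.mul_mono hIJ le_rfl).trans_eq (pow_succ' J n).symm) ?_⟩
    intro x hx
    have hxb : (⟨monomial (n + 1) x, reesAlgebra.monomial_mem.mpr hx⟩ : reesAlgebra J)
        ∈ Submodule.span (reesAlgebra I) (T : Set (reesAlgebra J)) := by
      rw [hT]; trivial
    rw [Submodule.mem_span_finset] at hxb
    obtain ⟨c, -, hc⟩ := hxb
    have hx' : x = ∑ b ∈ T, ((c b : R[X]) * (b : R[X])).coeff (n + 1) := by
      have := congrArg (fun p : reesAlgebra J => (p : R[X]).coeff (n + 1)) hc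
      simp only [AddSubmonoidClass.coe_finset_sum, finset_sum_coeff] at this
      rw [coeff_monomial, if_pos rfl] at this
      rw [← this]
      exact Finset.sum_congr rfl fun b _ => by rw [hsmul]
    rw [hx']
    apply Submodule.sum_mem
    intro b hbT
    rw [coeff_mul]
    apply Submodule.sum_mem
    rintro ⟨i, j⟩ hij
    rw [Finset.HasAntidiagonal.mem_antidiagonal] at hij
    rcases le_or_gt j n with hj | hj
    · -- i ≥ 1
      obtain ⟨i', rfl⟩ : ∃ i', i = i' + 1 := ⟨i - 1, by omega⟩
      have h1 : (c b : R[X]).coeff (i' + 1) ∈ I ^ (i' + 1) := (c b).2 _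
      have h2 : (b : R[X]).coeff j ∈ J ^ j := b.2 j
      have hsub : I ^ (i' + 1) * J ^ j ≤ I * J ^ n := by
        rw [pow_succ', mul_assoc]
        refine Ideal.mul_mono le_rfl ?_
        calc I ^ i' * J ^ j ≤ J ^ i' * J ^ j :=
              Ideal.mul_mono (Ideal.pow_right_mono hIJ i') le_rfl
          _ = J ^ (i' + j) := (pow_add J i' j).symm
          _ = J ^ n := by congr 1; omega
      exact hsub (Ideal.mul_mem_mul h1 h2)
    · have : (b : R[X]).coeff j = 0 := by
        apply coeff_eq_zero_of_natDegree_lt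
        have hbn : (b : R[X]).natDegree ≤ n :=
          Finset.le_sup (f := fun b : reesAlgebra J => (b : R[X]).natDegree) hbT
        exact lt_of_le_of_lt hbn hj
      rw [this, mul_zero]
      exact Submodule.zero_mem _
end

section
/- Let k be a field and let G ∈ k[Y₁,…,Yₙ] be a homogeneous Sₙ-invariant polynomial of degree m lying in the subring generated by the differences Yᵢ − Yⱼ. Write G = G(s₁,…,sₙ) as a weighted-homogeneous polynomial in the elementary symmetric polynomials (with sᵢ of weight i). Then for any commutative k-algebra S and monic polynomials f(Z) = Zⁿ + a₁Z^{n−1} + … + aₙ and g(Z₁) = Z₁ⁿ + b₁Z₁^{n−1} + … + bₙ in S[Z] related by the substitution Z₁ = Z − λ for some λ ∈ S (i.e., f(Z) = g(Z − λ)), one has G(a₁,…,aₙ) = G(b₁,…,bₙ) in S. -/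
open MvPolynomial Polynomial Finset

lemma aux_monic_rep {A : Type*} [CommRing A] {n : ℕ} (f : Polynomial A) (hf : f.Monic)
    (hdeg : f.natDegree = n) :
    f = Polynomial.X ^ n + ∑ i : Fin n,
      Polynomial.C (f.coeff (n - ((i : ℕ) + 1))) * Polynomial.X ^ (n - ((i : ℕ) + 1)) := by
  have h1 : f.coeff n = 1 := by rw [← hdeg]; exact hf.coeff_natDegree
  conv_lhs => rw [f.as_sum_range' (n + 1) (by omega)]
  rw [Finset.sum_range_succ, h1, add_comm]
  congr 1
  · rw [Polynomial.X_pow_eq_monomial]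
  · rw [← Finset.sum_range_reflect (fun i => Polynomial.monomial i (f.coeff i)) n,
      ← Fin.sum_univ_eq_sum_range (fun i =>
        Polynomial.monomial (n - 1 - i) (f.coeff (n - 1 - i)))]
    refine Finset.sum_congr rfl fun i _ => ?_
    have h2 : n - ((i : ℕ) + 1) = n - 1 - (i : ℕ) := by omega
    rw [h2, Polynomial.C_mul_X_pow_eq_monomial]

lemma aux_coeff {A : Type*} [CommRing A] {n : ℕ} (c : Fin n → A) (i0 : Fin n) :
    (Polynomial.X ^ n + ∑ i : Fin n,
        Polynomial.C (c i) * Polynomial.X ^ (n - ((i : ℕ) + 1))).coeff (n - ((i0 : ℕ) + 1))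
      = c i0 := by
  have h0 : (0 : ℕ) < n := i0.pos
  have hi0 := i0.isLt
  rw [Polynomial.coeff_add, Polynomial.coeff_X_pow, if_neg (by omega), zero_add,
    Polynomial.finset_sum_coeff]
  rw [Finset.sum_eq_single i0]
  · rw [Polynomial.coeff_C_mul, Polynomial.coeff_X_pow, if_pos rfl, mul_one]
  · intro i _ hne
    have hi := i.isLt
    rw [Polynomial.coeff_C_mul, Polynomial.coeff_X_pow, if_neg, mul_zero]
    intro h
    exact hne (Fin.ext (by omega))
  · intro h
    exact absurd (Finset.mem_univ i0) h

/-- cancelling a double sign -/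
lemma aux_sign {A : Type*} [CommRing A] (a : ℕ) (x : A) :
    (-1 : A) ^ a * ((-1 : A) ^ a * x) = x := by
  rw [← mul_assoc, ← pow_add, Even.neg_one_pow ⟨a, rfl⟩, one_mul]

/-- Let `G` be a homogeneous symmetric polynomial of degree `m` lying in
the subalgebra generated by the differences `Yᵢ - Yⱼ`, and let `Ĝ` be its (weighted
homogeneous) expression in the elementary symmetric polynomials.  Then for any monic
polynomials `f(Z) = Zⁿ + a₁Z^{n-1} + … + aₙ` and `g(Z₁) = f(Z₁ + λ)` over a `k`-algebra `S`
(i.e. `f(Z) = g(Z - λ)`), evaluating `Ĝ` at the coefficients (with the sign convention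
`sᵢ ↦ (-1)ⁱaᵢ`) gives `G(a₁,…,aₙ) = G(b₁,…,bₙ)`. -/
theorem diff_invariant_coeff_evaluation {k : Type*} [Field k] {n m : ℕ}
    (G : MvPolynomial (Fin n) k)
    (hGsym : ∀ σ : Equiv.Perm (Fin n), MvPolynomial.rename σ G = G)
    (hGhom : G.IsHomogeneous m)
    (hGdiff : G ∈ Algebra.adjoin k
      {h : MvPolynomial (Fin n) k | ∃ i j : Fin n, h = MvPolynomial.X i - MvPolynomial.X j})
    (Ghat : MvPolynomial (Fin n) k)
    (hW : MvPolynomial.IsWeightedHomogeneous (fun i : Fin n => (i : ℕ) + 1) Ghat m)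
    (hrep : MvPolynomial.aeval
      (fun i : Fin n => MvPolynomial.esymm (Fin n) k ((i : ℕ) + 1)) Ghat = G)
    {S : Type*} [CommRing S] [Algebra k S] (lam : S)
    (f : Polynomial S) (hf : f.Monic) (hdeg : f.natDegree = n) :
    MvPolynomial.aeval
        (fun i : Fin n => (-1 : S) ^ ((i : ℕ) + 1) * f.coeff (n - ((i : ℕ) + 1))) Ghat =
      MvPolynomial.aeval
        (fun i : Fin n => (-1 : S) ^ ((i : ℕ) + 1) *
          (f.comp (Polynomial.X + Polynomial.C lam)).coeff (n - ((i : ℕ) + 1))) Ghat := by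
  classical
  -- the base ring `R = k[Λ]` with the universal translation parameter `Λ`
  let R := Polynomial k
  let Λ : R := Polynomial.X
  -- the universal monic polynomial with signed generic coefficients
  set F : Polynomial (MvPolynomial (Fin n) R) :=
    Polynomial.X ^ n + ∑ i : Fin n,
      Polynomial.C ((-1 : MvPolynomial (Fin n) R) ^ ((i : ℕ) + 1) * MvPolynomial.X i)
        * Polynomial.X ^ (n - ((i : ℕ) + 1)) with hFdef
  set v : Fin n → MvPolynomial (Fin n) R := fun i =>
    (-1) ^ ((i : ℕ) + 1) *
      (F.comp (Polynomial.X + Polynomial.C (MvPolynomial.C Λ))).coeff (n - ((i : ℕ) + 1))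
    with hvdef
  -- elementary symmetric polynomials over R
  let e : Fin n → MvPolynomial (Fin n) R := fun i => MvPolynomial.esymm (Fin n) R ((i : ℕ) + 1)
  -- the injective evaluation at elementary symmetric polynomials
  let ρ : MvPolynomial (Fin n) R →ₐ[R] MvPolynomial (Fin n) R := MvPolynomial.aeval e
  have hinj : Function.Injective ρ := by
    intro p q h
    refine MvPolynomial.esymmAlgHom_fin_injective R (le_refl n) (a₁ := p) (a₂ := q)
      (Subtype.ext ?_)
    rw [MvPolynomial.esymmAlgHom_apply, MvPolynomial.esymmAlgHom_apply]
    exact h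
  have hco : ∀ (Q : Polynomial (MvPolynomial (Fin n) R)) (r : ℕ),
      ρ (Q.coeff r) = (Q.map (ρ : MvPolynomial (Fin n) R →+* MvPolynomial (Fin n) R)).coeff r :=
    fun Q r => (Polynomial.coeff_map _ _).symm
  -- the translation map
  let τ : MvPolynomial (Fin n) R →ₐ[R] MvPolynomial (Fin n) R :=
    MvPolynomial.aeval (fun j => MvPolynomial.X j - MvPolynomial.C Λ)
  -- base-change of G
  have hβ : MvPolynomial.aeval e Ghat =
      MvPolynomial.aeval (MvPolynomial.X : Fin n → MvPolynomial (Fin n) R) G := by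
    rw [← hrep,
      MvPolynomial.comp_aeval_apply _
        (MvPolynomial.aeval (MvPolynomial.X : Fin n → MvPolynomial (Fin n) R)) Ghat]
    exact congrArg (fun w => MvPolynomial.aeval w Ghat) (_root_.funext fun i => by
      rw [MvPolynomial.aeval_esymm_eq_multiset_esymm,
        ← MvPolynomial.esymm_eq_multiset_esymm]).symm
  -- translation invariance of G
  have hτG' : ∀ x ∈ Algebra.adjoin k
      {h : MvPolynomial (Fin n) k | ∃ i j : Fin n, h = MvPolynomial.X i - MvPolynomial.X j},
      τ (MvPolynomial.aeval (MvPolynomial.X : Fin n → MvPolynomial (Fin n) R) x) =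
        MvPolynomial.aeval (MvPolynomial.X : Fin n → MvPolynomial (Fin n) R) x := by
    intro x hx
    induction hx using Algebra.adjoin_induction with
    | mem x hx =>
      obtain ⟨i, j, rfl⟩ := hx
      simp only [map_sub, MvPolynomial.aeval_X]
      simp [τ]
    | algebraMap r => simp [τ]
    | add x y hx hy ihx ihy => rw [map_add, map_add, ihx, ihy]
    | mul x y hx hy ihx ihy => rw [map_mul, map_mul, ihx, ihy]
  have hτG := hτG' G hGdiff
  -- the key claim, proven universally
  have claimA :
      (MvPolynomial.aeval (MvPolynomial.X : Fin n → MvPolynomial (Fin n) R) Ghat) =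
        MvPolynomial.aeval v Ghat := by
    apply hinj
    -- compute the coefficients of `Polynomial.map ρ F`
    set P : Polynomial (MvPolynomial (Fin n) R) :=
      ∏ j : Fin n, (Polynomial.X - Polynomial.C (MvPolynomial.X j)) with hPdef
    have hPmonic : P.Monic :=
      Polynomial.monic_prod_of_monic _ _ fun j _ => Polynomial.monic_X_sub_C _
    have hPdeg : P.natDegree = n := by
      rw [hPdef, Polynomial.natDegree_prod_of_monic _ _ fun j _ => Polynomial.monic_X_sub_C _]
      simp [Polynomial.natDegree_X_sub_C]
    have hPcoeff : ∀ i : Fin n,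
        P.coeff (n - ((i : ℕ) + 1)) = (-1) ^ ((i : ℕ) + 1) * e i := by
      intro i
      have hle : n - ((i : ℕ) + 1) ≤ n := Nat.sub_le _ _
      have h1 : P = ∏ j : Fin n, (Polynomial.X + Polynomial.C (-(MvPolynomial.X j))) := by
        rw [hPdef]
        refine Finset.prod_congr rfl fun j _ => ?_
        simp only [Polynomial.C_neg]
        ring
      rw [h1]
      rw [Finset.prod_X_add_C_coeff univ (fun j => -(MvPolynomial.X j : MvPolynomial (Fin n) R))
        (by simpa using hle)]
      have h2 : (univ.val.map fun j : Fin n => -(MvPolynomial.X j : MvPolynomial (Fin n) R)) =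
          Multiset.map Neg.neg (univ.val.map MvPolynomial.X) := by
        rw [Multiset.map_map]; rfl
      have h3 : #(univ : Finset (Fin n)) - (n - ((i : ℕ) + 1)) = (i : ℕ) + 1 := by
        have := i.isLt; simp only [Finset.card_univ, Fintype.card_fin]; omega
      rw [h3, ← Finset.esymm_map_val, h2, Multiset.esymm_neg]
      congr 1
      exact (congrFun (MvPolynomial.esymm_eq_multiset_esymm (Fin n) R) _).symm
    have hmapF : Polynomial.map (ρ : MvPolynomial (Fin n) R →+* MvPolynomial (Fin n) R) F = P := by
      rw [hFdef, Polynomial.map_add, Polynomial.map_pow, Polynomial.map_X, Polynomial.map_sum]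
      rw [aux_monic_rep P hPmonic hPdeg]
      congr 1
      refine Finset.sum_congr rfl fun i _ => ?_
      rw [Polynomial.map_mul, Polynomial.map_pow, Polynomial.map_X, Polynomial.map_C]
      congr 1
      rw [hPcoeff i]
      simp [ρ, e]
    -- now compute ρ (v i)
    have hρv : ∀ i : Fin n, ρ (v i) = τ (e i) := by
      intro i
      have hle : n - ((i : ℕ) + 1) ≤ n := Nat.sub_le _ _
      simp only [hvdef]
      simp only [map_mul, map_pow, map_neg, map_one]
      rw [hco, Polynomial.map_comp, hmapF, Polynomial.map_add,
        Polynomial.map_X, Polynomial.map_C]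
      have hρC : (ρ : MvPolynomial (Fin n) R →+* MvPolynomial (Fin n) R) (MvPolynomial.C Λ)
          = MvPolynomial.C Λ := by
        simp [ρ, MvPolynomial.aeval_C, MvPolynomial.algebraMap_eq]
      rw [hρC]
      have hcomp : P.comp (Polynomial.X + Polynomial.C (MvPolynomial.C Λ)) =
          ∏ j : Fin n, (Polynomial.X +
            Polynomial.C (MvPolynomial.C Λ - MvPolynomial.X j)) := by
        rw [hPdef, Polynomial.prod_comp]
        refine Finset.prod_congr rfl fun j _ => ?_
        rw [Polynomial.sub_comp, Polynomial.X_comp, Polynomial.C_comp, Polynomial.C_sub]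
        ring
      rw [hcomp, Finset.prod_X_add_C_coeff univ
        (fun j => MvPolynomial.C Λ - MvPolynomial.X j) (by simpa using hle)]
      have h3 : #(univ : Finset (Fin n)) - (n - ((i : ℕ) + 1)) = (i : ℕ) + 1 := by
        have := i.isLt; simp only [Finset.card_univ, Fintype.card_fin]; omega
      have h2 : (univ.val.map fun j : Fin n =>
            (MvPolynomial.C Λ - MvPolynomial.X j : MvPolynomial (Fin n) R)) =
          Multiset.map Neg.neg (univ.val.map fun j =>
            (MvPolynomial.X j - MvPolynomial.C Λ : MvPolynomial (Fin n) R)) := by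
        rw [Multiset.map_map]
        refine Multiset.map_congr rfl fun j _ => ?_
        simp [neg_sub]
      rw [h3, ← Finset.esymm_map_val, h2, Multiset.esymm_neg, aux_sign]
      rw [← MvPolynomial.aeval_esymm_eq_multiset_esymm (σ := Fin n) (R := R)]
    -- put everything together
    have keyρ : ∀ g : Fin n → MvPolynomial (Fin n) R,
        ρ (MvPolynomial.aeval g Ghat) = MvPolynomial.aeval (fun i => ρ (g i)) Ghat :=
      fun g => MvPolynomial.comp_aeval_apply g (ρ.restrictScalars k) Ghat
    have keyτ : ∀ g : Fin n → MvPolynomial (Fin n) R,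
        τ (MvPolynomial.aeval g Ghat) = MvPolynomial.aeval (fun i => τ (g i)) Ghat :=
      fun g => MvPolynomial.comp_aeval_apply g (τ.restrictScalars k) Ghat
    rw [keyρ, keyρ]
    have hL : (fun i => ρ (MvPolynomial.X i)) = e := by
      funext i; simp [ρ]
    have hR : (fun i => ρ (v i)) = fun i => τ (e i) := by
      funext i; exact hρv i
    rw [hL, hR, ← keyτ e, hβ, hτG]
  -- transfer `claimA` to `S` along the evaluation `ψ`
  let ψ : MvPolynomial (Fin n) R →ₐ[k] S :=
    MvPolynomial.aevalTower (Polynomial.aeval lam)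
      (fun i => (-1 : S) ^ ((i : ℕ) + 1) * f.coeff (n - ((i : ℕ) + 1)))
  have hmapψF : Polynomial.map (ψ : MvPolynomial (Fin n) R →+* S) F = f := by
    rw [hFdef, Polynomial.map_add, Polynomial.map_pow, Polynomial.map_X, Polynomial.map_sum]
    rw [aux_monic_rep f hf hdeg]
    congr 1
    refine Finset.sum_congr rfl fun i _ => ?_
    rw [Polynomial.map_mul, Polynomial.map_pow, Polynomial.map_X, Polynomial.map_C]
    congr 1
    have hX : (ψ : MvPolynomial (Fin n) R →+* S)
          ((-1 : MvPolynomial (Fin n) R) ^ ((i : ℕ) + 1) * MvPolynomial.X i)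
        = f.coeff (n - ((i : ℕ) + 1)) := by
      show ψ ((-1 : MvPolynomial (Fin n) R) ^ ((i : ℕ) + 1) * MvPolynomial.X i) = _
      rw [map_mul, map_pow, map_neg, map_one]
      show (-1 : S) ^ ((i : ℕ) + 1) * ψ (MvPolynomial.X i) = _
      rw [show ψ (MvPolynomial.X i)
          = (-1 : S) ^ ((i : ℕ) + 1) * f.coeff (n - ((i : ℕ) + 1)) from
        MvPolynomial.aevalTower_X _ _ i]
      exact aux_sign _ _
    rw [hX]
  have hcoψ : ∀ (Q : Polynomial (MvPolynomial (Fin n) R)) (r : ℕ),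
      ψ (Q.coeff r) = (Q.map (ψ : MvPolynomial (Fin n) R →+* S)).coeff r :=
    fun Q r => (Polynomial.coeff_map _ _).symm
  have h1 := congrArg ψ claimA
  rw [MvPolynomial.comp_aeval_apply (fun i => (MvPolynomial.X i : MvPolynomial (Fin n) R))
      ψ Ghat, MvPolynomial.comp_aeval_apply v ψ Ghat] at h1
  have hLψ : (fun i => ψ (MvPolynomial.X i)) =
      (fun i : Fin n => (-1 : S) ^ ((i : ℕ) + 1) * f.coeff (n - ((i : ℕ) + 1))) := by
    funext i
    exact MvPolynomial.aevalTower_X _ _ i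
  have hRψ : (fun i => ψ (v i)) = (fun i : Fin n => (-1 : S) ^ ((i : ℕ) + 1) *
      (f.comp (Polynomial.X + Polynomial.C lam)).coeff (n - ((i : ℕ) + 1))) := by
    funext i
    simp only [hvdef]
    simp only [map_mul, map_pow, map_neg, map_one]
    rw [hcoψ, Polynomial.map_comp, hmapψF, Polynomial.map_add,
      Polynomial.map_X, Polynomial.map_C]
    have hψC : (ψ : MvPolynomial (Fin n) R →+* S) (MvPolynomial.C Λ) = lam := by
      show ψ (MvPolynomial.C Λ) = lam
      rw [show ψ (MvPolynomial.C Λ) = Polynomial.aeval lam Λ from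
        MvPolynomial.aevalTower_C _ _ Λ]
      exact Polynomial.aeval_X lam
    rw [hψC]
  rw [hLψ, hRψ] at h1
  exact h1
end
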